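/- arXiv:2502.05059 — 2 statements merged into one kernel-verified Lean document; each statement's English description precedes it below -/
import Mathlib

section
/- Let H' be a d-labeled graph, let i ≠ j be labels, let H = ρ_{i→j}(H'), and let S ⊆ V(H') have characteristic (α', β') in H'. Then the characteristic (α, β) of S in H satisfies, for every I ⊆ {1,…,d}: if j ∈ I then (α(I), β(I)) = (α'(I ∪ {i}), β'(I ∪ {i})), and if j ∉ I then (α(I), β(I)) = (α'(I ∖ {i}), β'(I ∖ {i})). -/
open Finset

variable {V : Type*} {d : ℕ}

/-- `M` is a vertex cover of `(H with vertex set A) − S`: `M ⊆ A \ S` and every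
edge of `H` with both endpoints outside `S` has an endpoint in `M`. -/
def IsVCDel [DecidableEq V] (H : SimpleGraph V) (A S M : Finset V) : Prop :=
  M ⊆ A \ S ∧ ∀ ⦃u v : V⦄, H.Adj u v → u ∉ S → v ∉ S → u ∈ M ∨ v ∈ M

/-- All edges of the `d`-labeled graph `H` lie inside its vertex set `A`. -/
def IsLabeledGraph (H : SimpleGraph V) (A : Finset V) : Prop :=
  ∀ ⦃u v : V⦄, H.Adj u v → u ∈ A ∧ v ∈ A

/-- `T` extends type `I` in the graph with vertex set `B` and labeling `lab`:
every label of `I` is full, i.e. all vertices of `B` carrying it lie in `T`. -/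
def ExtendsType (B : Finset V) (lab : V → Fin d) (I : Finset (Fin d)) (T : Finset V) : Prop :=
  ∀ i ∈ I, ∀ w ∈ B, lab w = i → w ∈ T

/-- `(α, β)` is the characteristic of `S` in the `d`-labeled graph
`(H, A, lab)`: for each set of labels `I`, `α I` is the minimum cardinality of
a vertex cover of `H − S` extending type `I`, and `β I = 1` iff there is
exactly one vertex cover of `H − S` of cardinality `α I` extending type `I`
(and `β I = 2` otherwise). -/
def IsLabChar [DecidableEq V] (H : SimpleGraph V) (A : Finset V) (lab : V → Fin d)
    (S : Finset V) (α β : Finset (Fin d) → ℕ) : Prop :=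
  ∀ I : Finset (Fin d),
    (∃ M, (IsVCDel H A S M ∧ ExtendsType (A \ S) lab I M) ∧ M.card = α I) ∧
    (∀ M, IsVCDel H A S M ∧ ExtendsType (A \ S) lab I M → α I ≤ M.card) ∧
    (β I = 1 ∨ β I = 2) ∧
    (β I = 1 ↔ ∃! M, (IsVCDel H A S M ∧ ExtendsType (A \ S) lab I M) ∧ M.card = α I)

/-- `η_{i,j}`: add an edge between every vertex with label `i` and every vertex
with label `j` (inside the vertex set `A`). -/
def etaGraph [DecidableEq V] (H : SimpleGraph V) (A : Finset V) (lab : V → Fin d)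
    (i j : Fin d) : SimpleGraph V :=
  H ⊔ SimpleGraph.fromEdgeSet
    {e | ∃ u ∈ A, ∃ w ∈ A, lab u = i ∧ lab w = j ∧ e = s(u, w)}

/-- The effect of the relabeling operation `ρ_{i→j}` (changing every label `i`
to `j`) on the characteristic of a fixed set `S` in a `d`-labeled graph. -/
theorem char_rho [Fintype V] [DecidableEq V]
    (H' : SimpleGraph V) (A : Finset V) (lab : V → Fin d)
    (hH' : IsLabeledGraph H' A) (i j : Fin d) (hij : i ≠ j)
    (S : Finset V) (hS : S ⊆ A)
    (α' β' α β : Finset (Fin d) → ℕ)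
    (h' : IsLabChar H' A lab S α' β')
    (h : IsLabChar H' A (fun w => if lab w = i then j else lab w) S α β) :
    ∀ I : Finset (Fin d),
      (j ∈ I → α I = α' (insert i I) ∧ β I = β' (insert i I)) ∧
      (j ∉ I → α I = α' (I.erase i) ∧ β I = β' (I.erase i)) := by
  intro I
  have key : ∀ J : Finset (Fin d),
      (∀ M : Finset V, ExtendsType (A \ S) (fun w => if lab w = i then j else lab w) I M
        ↔ ExtendsType (A \ S) lab J M) →
      α I = α' J ∧ β I = β' J := by
    intro J hext
    obtain ⟨⟨M, hM, hMc⟩, hmin, hβ, hβiff⟩ := h I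
    obtain ⟨⟨M', hM', hM'c⟩, hmin', hβ', hβ'iff⟩ := h' J
    have hα : α I = α' J := by
      apply le_antisymm
      · exact hM'c ▸ hmin M' ⟨hM'.1, (hext M').mpr hM'.2⟩
      · exact hMc ▸ hmin' M ⟨hM.1, (hext M).mp hM.2⟩
    refine ⟨hα, ?_⟩
    have hiff : (β I = 1) ↔ (β' J = 1) := by
      rw [hβiff, hβ'iff]
      constructor
      · rintro ⟨N, ⟨⟨hN1, hN2⟩, hNc⟩, hNu⟩
        exact ⟨N, ⟨⟨hN1, (hext N).mp hN2⟩, hα ▸ hNc⟩,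
          fun N' ⟨⟨g1, g2⟩, g3⟩ => hNu N' ⟨⟨g1, (hext N').mpr g2⟩, hα ▸ g3⟩⟩
      · rintro ⟨N, ⟨⟨hN1, hN2⟩, hNc⟩, hNu⟩
        exact ⟨N, ⟨⟨hN1, (hext N).mpr hN2⟩, hα.symm ▸ hNc⟩,
          fun N' ⟨⟨g1, g2⟩, g3⟩ => hNu N' ⟨⟨g1, (hext N').mp g2⟩, hα.symm ▸ g3⟩⟩
    rcases hβ with h1 | h2
    · rw [h1, hiff.mp h1]
    · rcases hβ' with g1 | g2
      · exact absurd (hiff.mpr g1) (by omega)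
      · rw [h2, g2]
  constructor
  · intro hj
    apply key
    intro M
    constructor
    · intro hE k hk w hw hlw
      by_cases hwi : lab w = i
      · exact hE j hj w hw (by simp [hwi])
      · have hk' : k ∈ I := by
          rcases Finset.mem_insert.mp hk with rfl | hk'
          · exact absurd hlw hwi
          · exact hk'
        exact hE k hk' w hw (by simp only [if_neg hwi]; exact hlw)
    · intro hE k hk w hw hlw
      by_cases hwi : lab w = i
      · exact hE i (Finset.mem_insert_self i I) w hw hwi
      · simp only [hwi, if_false] at hlw
        exact hE k (Finset.mem_insert_of_mem hk) w hw hlw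
  · intro hj
    apply key
    intro M
    constructor
    · intro hE k hk w hw hlw
      have hki : k ≠ i := Finset.ne_of_mem_erase hk
      have hkI : k ∈ I := Finset.mem_of_mem_erase hk
      have hwi : lab w ≠ i := hlw ▸ hki
      exact hE k hkI w hw (by simp only [if_neg hwi]; exact hlw)
    · intro hE k hk w hw hlw
      by_cases hwi : lab w = i
      · simp only [if_pos hwi] at hlw
        exact absurd (hlw ▸ hk) hj
      · simp only [if_neg hwi] at hlw
        exact hE k (Finset.mem_erase.mpr ⟨fun hki => hwi (hlw.trans hki), hk⟩) w hw hlw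
end

section
/- Let H₁ and H₂ be d-labeled graphs on disjoint vertex sets and let H = H₁ ⊕ H₂ be their disjoint union. Let S₁ ⊆ V(H₁) have characteristic (α₁, β₁) in H₁ and let S₂ ⊆ V(H₂) have characteristic (α₂, β₂) in H₂. Then the characteristic (α, β) of S₁ ∪ S₂ in H satisfies, for every I ⊆ {1,…,d}: α(I) = α₁(I) + α₂(I), and β(I) = 1 if and only if β₁(I) = 1 and β₂(I) = 1. -/
open Finset

variable {V : Type*} {d : ℕ}

/-- Disjoint union of two `d`-labeled graphs: the characteristic of `S₁ ∪ S₂`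
in `H₁ ⊕ H₂` is obtained componentwise. -/
theorem char_disjoint_union [Fintype V] [DecidableEq V]
    (H₁ H₂ : SimpleGraph V) (A₁ A₂ : Finset V) (lab : V → Fin d)
    (hH₁ : IsLabeledGraph H₁ A₁) (hH₂ : IsLabeledGraph H₂ A₂)
    (hdisj : A₁ ∩ A₂ = ∅)
    (S₁ S₂ : Finset V) (hS₁ : S₁ ⊆ A₁) (hS₂ : S₂ ⊆ A₂)
    (α₁ β₁ α₂ β₂ α β : Finset (Fin d) → ℕ)
    (h₁ : IsLabChar H₁ A₁ lab S₁ α₁ β₁)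
    (h₂ : IsLabChar H₂ A₂ lab S₂ α₂ β₂)
    (h : IsLabChar (H₁ ⊔ H₂) (A₁ ∪ A₂) lab (S₁ ∪ S₂) α β) :
    ∀ I : Finset (Fin d),
      α I = α₁ I + α₂ I ∧ (β I = 1 ↔ β₁ I = 1 ∧ β₂ I = 1) := by
  intro I
  obtain ⟨⟨M₁, hM₁, hM₁c⟩, hmin₁, hβ₁or, hβ₁iff⟩ := h₁ I
  obtain ⟨⟨M₂, hM₂, hM₂c⟩, hmin₂, hβ₂or, hβ₂iff⟩ := h₂ I
  obtain ⟨⟨M, hM, hMc⟩, hmin, hβor, hβiff⟩ := h I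
  have hdis : ∀ x, x ∈ A₁ → x ∉ A₂ := by
    intro x h1 h2
    have : x ∈ A₁ ∩ A₂ := Finset.mem_inter.mpr ⟨h1, h2⟩
    simp [hdisj] at this
  -- combine two component covers into one for the union
  have combine : ∀ N₁ N₂, (IsVCDel H₁ A₁ S₁ N₁ ∧ ExtendsType (A₁ \ S₁) lab I N₁) →
      (IsVCDel H₂ A₂ S₂ N₂ ∧ ExtendsType (A₂ \ S₂) lab I N₂) →
      (IsVCDel (H₁ ⊔ H₂) (A₁ ∪ A₂) (S₁ ∪ S₂) (N₁ ∪ N₂) ∧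
       ExtendsType ((A₁ ∪ A₂) \ (S₁ ∪ S₂)) lab I (N₁ ∪ N₂)) ∧
      (N₁ ∪ N₂).card = N₁.card + N₂.card := by
    intro N₁ N₂ ⟨⟨hsub₁, hcov₁⟩, hext₁⟩ ⟨⟨hsub₂, hcov₂⟩, hext₂⟩
    have hN₁A : ∀ x ∈ N₁, x ∈ A₁ ∧ x ∉ S₁ := by
      intro x hx; have := hsub₁ hx; simpa [Finset.mem_sdiff] using this
    have hN₂A : ∀ x ∈ N₂, x ∈ A₂ ∧ x ∉ S₂ := by
      intro x hx; have := hsub₂ hx; simpa [Finset.mem_sdiff] using this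
    have hdisNN : Disjoint N₁ N₂ := by
      rw [Finset.disjoint_left]
      intro x hx hx2
      exact hdis x (hN₁A x hx).1 (hN₂A x hx2).1
    refine ⟨⟨⟨?_, ?_⟩, ?_⟩, Finset.card_union_of_disjoint hdisNN⟩
    · intro x hx
      rcases Finset.mem_union.mp hx with hx | hx
      · obtain ⟨hxa, hxs⟩ := hN₁A x hx
        have hxs2 : x ∉ S₂ := fun hc => hdis x hxa (hS₂ hc)
        simp [Finset.mem_sdiff, Finset.mem_union, hxa, hxs, hxs2]
      · obtain ⟨hxa, hxs⟩ := hN₂A x hx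
        have hxs1 : x ∉ S₁ := fun hc => hdis x (hS₁ hc) hxa
        simp [Finset.mem_sdiff, Finset.mem_union, hxa, hxs, hxs1]
    · intro u v hadj hu hv
      simp only [Finset.mem_union, not_or] at hu hv
      rcases hadj with hadj | hadj
      · rcases hcov₁ hadj hu.1 hv.1 with hc | hc
        · exact Or.inl (Finset.mem_union_left _ hc)
        · exact Or.inr (Finset.mem_union_left _ hc)
      · rcases hcov₂ hadj hu.2 hv.2 with hc | hc
        · exact Or.inl (Finset.mem_union_right _ hc)
        · exact Or.inr (Finset.mem_union_right _ hc)
    · intro i hi w hw hlab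
      simp only [Finset.mem_sdiff, Finset.mem_union, not_or] at hw
      obtain ⟨hwA, hwS₁, hwS₂⟩ := hw
      rcases hwA with hwA | hwA
      · exact Finset.mem_union_left _ (hext₁ i hi w (Finset.mem_sdiff.mpr ⟨hwA, hwS₁⟩) hlab)
      · exact Finset.mem_union_right _ (hext₂ i hi w (Finset.mem_sdiff.mpr ⟨hwA, hwS₂⟩) hlab)
  -- split a cover of the union into component covers
  have split : ∀ N, (IsVCDel (H₁ ⊔ H₂) (A₁ ∪ A₂) (S₁ ∪ S₂) N ∧
      ExtendsType ((A₁ ∪ A₂) \ (S₁ ∪ S₂)) lab I N) →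
      (IsVCDel H₁ A₁ S₁ (N ∩ A₁) ∧ ExtendsType (A₁ \ S₁) lab I (N ∩ A₁)) ∧
      (IsVCDel H₂ A₂ S₂ (N ∩ A₂) ∧ ExtendsType (A₂ \ S₂) lab I (N ∩ A₂)) ∧
      N = (N ∩ A₁) ∪ (N ∩ A₂) ∧ N.card = (N ∩ A₁).card + (N ∩ A₂).card := by
    intro N ⟨⟨hsub, hcov⟩, hext⟩
    have hNmem : ∀ x ∈ N, (x ∈ A₁ ∨ x ∈ A₂) ∧ x ∉ S₁ ∧ x ∉ S₂ := by
      intro x hx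
      have := hsub hx
      simpa [Finset.mem_sdiff, Finset.mem_union, not_or] using this
    have heq : N = (N ∩ A₁) ∪ (N ∩ A₂) := by
      ext x
      simp only [Finset.mem_union, Finset.mem_inter]
      constructor
      · intro hx
        rcases (hNmem x hx).1 with h' | h'
        · exact Or.inl ⟨hx, h'⟩
        · exact Or.inr ⟨hx, h'⟩
      · rintro (⟨hx, _⟩ | ⟨hx, _⟩) <;> exact hx
    have hdisN : Disjoint (N ∩ A₁) (N ∩ A₂) := by
      rw [Finset.disjoint_left]
      intro x hx hx2
      exact hdis x (Finset.mem_inter.mp hx).2 (Finset.mem_inter.mp hx2).2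
    refine ⟨⟨⟨?_, ?_⟩, ?_⟩, ⟨⟨?_, ?_⟩, ?_⟩, heq, by
      conv_lhs => rw [heq]
      exact Finset.card_union_of_disjoint hdisN⟩
    · intro x hx
      obtain ⟨hxN, hxA⟩ := Finset.mem_inter.mp hx
      exact Finset.mem_sdiff.mpr ⟨hxA, (hNmem x hxN).2.1⟩
    · intro u v hadj hu hv
      obtain ⟨huA, hvA⟩ := hH₁ hadj
      have hu2 : u ∉ S₂ := fun hc => hdis u huA (hS₂ hc)
      have hv2 : v ∉ S₂ := fun hc => hdis v hvA (hS₂ hc)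
      rcases hcov (Or.inl hadj) (by simp [Finset.mem_union, hu, hu2])
          (by simp [Finset.mem_union, hv, hv2]) with hc | hc
      · exact Or.inl (Finset.mem_inter.mpr ⟨hc, huA⟩)
      · exact Or.inr (Finset.mem_inter.mpr ⟨hc, hvA⟩)
    · intro i hi w hw hlab
      obtain ⟨hwA, hwS⟩ := Finset.mem_sdiff.mp hw
      have hw2 : w ∉ S₂ := fun hc => hdis w hwA (hS₂ hc)
      have : w ∈ N := hext i hi w (by simp [Finset.mem_sdiff, Finset.mem_union, hwA, hwS, hw2]) hlab
      exact Finset.mem_inter.mpr ⟨this, hwA⟩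
    · intro x hx
      obtain ⟨hxN, hxA⟩ := Finset.mem_inter.mp hx
      exact Finset.mem_sdiff.mpr ⟨hxA, (hNmem x hxN).2.2⟩
    · intro u v hadj hu hv
      obtain ⟨huA, hvA⟩ := hH₂ hadj
      have hu1 : u ∉ S₁ := fun hc => hdis u (hS₁ hc) huA
      have hv1 : v ∉ S₁ := fun hc => hdis v (hS₁ hc) hvA
      rcases hcov (Or.inr hadj) (by simp [Finset.mem_union, hu, hu1])
          (by simp [Finset.mem_union, hv, hv1]) with hc | hc
      · exact Or.inl (Finset.mem_inter.mpr ⟨hc, huA⟩)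
      · exact Or.inr (Finset.mem_inter.mpr ⟨hc, hvA⟩)
    · intro i hi w hw hlab
      obtain ⟨hwA, hwS⟩ := Finset.mem_sdiff.mp hw
      have hw1 : w ∉ S₁ := fun hc => hdis w (hS₁ hc) hwA
      have : w ∈ N := hext i hi w (by simp [Finset.mem_sdiff, Finset.mem_union, hwA, hwS, hw1]) hlab
      exact Finset.mem_inter.mpr ⟨this, hwA⟩
  -- α equality
  obtain ⟨hcmb, hcmbc⟩ := combine M₁ M₂ hM₁ hM₂
  have hle : α I ≤ α₁ I + α₂ I := by
    have := hmin _ hcmb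
    omega
  obtain ⟨hsp₁, hsp₂, heqM, hcardM⟩ := split M hM
  have hge₁ := hmin₁ _ hsp₁
  have hge₂ := hmin₂ _ hsp₂
  have hαeq : α I = α₁ I + α₂ I := by omega
  refine ⟨hαeq, ?_, ?_⟩
  · -- β I = 1 → β₁ I = 1 ∧ β₂ I = 1
    intro hβ
    obtain ⟨M₀, hM₀, huniq⟩ := hβiff.mp hβ
    have inter_eq : ∀ N₁, (IsVCDel H₁ A₁ S₁ N₁ ∧ ExtendsType (A₁ \ S₁) lab I N₁) →
        (N₁ ∪ M₂) ∩ A₁ = N₁ := by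
      intro N₁ hN₁
      ext x
      simp only [Finset.mem_inter, Finset.mem_union]
      constructor
      · rintro ⟨hx | hx, hxA⟩
        · exact hx
        · exact absurd ((Finset.mem_sdiff.mp (hM₂.1.1 hx)).1) (fun hc => hdis x hxA hc)
      · intro hx
        have hxA := (Finset.mem_sdiff.mp (hN₁.1.1 hx)).1
        exact ⟨Or.inl hx, hxA⟩
    have inter_eq₂ : ∀ N₂, (IsVCDel H₂ A₂ S₂ N₂ ∧ ExtendsType (A₂ \ S₂) lab I N₂) →
        (M₁ ∪ N₂) ∩ A₂ = N₂ := by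
      intro N₂ hN₂
      ext x
      simp only [Finset.mem_inter, Finset.mem_union]
      constructor
      · rintro ⟨hx | hx, hxA⟩
        · exact absurd ((Finset.mem_sdiff.mp (hM₁.1.1 hx)).1) (fun hc => hdis x hc hxA)
        · exact hx
      · intro hx
        have hxA := (Finset.mem_sdiff.mp (hN₂.1.1 hx)).1
        exact ⟨Or.inr hx, hxA⟩
    constructor
    · apply hβ₁iff.mpr
      refine ⟨M₁, ⟨hM₁, hM₁c⟩, ?_⟩
      intro N₁ ⟨hN₁, hN₁c⟩
      obtain ⟨hc, hcc⟩ := combine N₁ M₂ hN₁ hM₂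
      have h1 : N₁ ∪ M₂ = M₀ := huniq _ ⟨hc, by omega⟩
      have h2 : M₁ ∪ M₂ = M₀ := huniq _ ⟨hcmb, by omega⟩
      calc N₁ = (N₁ ∪ M₂) ∩ A₁ := (inter_eq N₁ hN₁).symm
        _ = (M₁ ∪ M₂) ∩ A₁ := by rw [h1, h2]
        _ = M₁ := inter_eq M₁ hM₁
    · apply hβ₂iff.mpr
      refine ⟨M₂, ⟨hM₂, hM₂c⟩, ?_⟩
      intro N₂ ⟨hN₂, hN₂c⟩
      obtain ⟨hc, hcc⟩ := combine M₁ N₂ hM₁ hN₂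
      have h1 : M₁ ∪ N₂ = M₀ := huniq _ ⟨hc, by omega⟩
      have h2 : M₁ ∪ M₂ = M₀ := huniq _ ⟨hcmb, by omega⟩
      calc N₂ = (M₁ ∪ N₂) ∩ A₂ := (inter_eq₂ N₂ hN₂).symm
        _ = (M₁ ∪ M₂) ∩ A₂ := by rw [h1, h2]
        _ = M₂ := inter_eq₂ M₂ hM₂
  · -- β₁ I = 1 ∧ β₂ I = 1 → β I = 1
    rintro ⟨hb1, hb2⟩
    obtain ⟨M₁', hM₁', huniq₁⟩ := hβ₁iff.mp hb1
    obtain ⟨M₂', hM₂', huniq₂⟩ := hβ₂iff.mp hb2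
    apply hβiff.mpr
    obtain ⟨hc, hcc⟩ := combine M₁' M₂' hM₁'.1 hM₂'.1
    refine ⟨M₁' ∪ M₂', ⟨hc, by omega⟩, ?_⟩
    intro N ⟨hN, hNc⟩
    obtain ⟨hsN₁, hsN₂, heqN, hcardN⟩ := split N hN
    have hgeN₁ := hmin₁ _ hsN₁
    have hgeN₂ := hmin₂ _ hsN₂
    have e₁ : N ∩ A₁ = M₁' := huniq₁ _ ⟨hsN₁, by omega⟩
    have e₂ : N ∩ A₂ = M₂' := huniq₂ _ ⟨hsN₂, by omega⟩
    rw [heqN, e₁, e₂]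
end
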